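/- arXiv:2008.07474 — 2 statements merged into one kernel-verified Lean document; each statement's English description precedes it below -/
import Mathlib

section
/- Let G be a τ-critical graph with τ(G) = t, |V(G)| = n, and let r be a nonnegative integer with r ≤ t. Then r·|V(G)| + |E(G)| ≤ (t+r+1 choose 2). -/
open SimpleGraph

variable {V : Type*}

/-- A transversal set (vertex cover): a set of vertices incident to all edges. -/
def IsTransversal (G : SimpleGraph V) (T : Finset V) : Prop :=
  ∀ ⦃u v : V⦄, G.Adj u v → u ∈ T ∨ v ∈ T

/-- The transversal number `τ(G)`: minimum cardinality of a transversal set. -/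
noncomputable def tauNum (G : SimpleGraph V) [Fintype V] : ℕ :=
  sInf {k | ∃ T : Finset V, T.card = k ∧ IsTransversal G T}

/-- `G` is τ-critical: it has no isolated vertex and deleting any edge decreases `τ`. -/
def IsTauCritical (G : SimpleGraph V) [Fintype V] : Prop :=
  (∀ v : V, ∃ u, G.Adj v u) ∧
    ∀ e ∈ G.edgeSet, tauNum (G.deleteEdges {e}) < tauNum G

/-- `mK2 m` is the disjoint union of `m` copies of `K₂`. -/
def mK2 (m : ℕ) : SimpleGraph (Fin m × Fin 2) where
  Adj x y := x.1 = y.1 ∧ x.2 ≠ y.2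
  symm := ⟨fun _ _ ⟨h1, h2⟩ => ⟨h1.symm, h2.symm⟩⟩
  loopless := ⟨fun _ ⟨_, h⟩ => h rfl⟩

/-- The spectral radius `λ₁(G)`: the largest eigenvalue of the adjacency matrix of `G`. -/
noncomputable def specRad (G : SimpleGraph V) [Fintype V] [DecidableEq V]
    [DecidableRel G.Adj] : ℝ :=
  sSup (spectrum ℝ (G.adjMatrix ℝ))

/-- The signless Laplacian spectral radius `q₁(G)`: the largest eigenvalue of
`Q(G) = D(G) + A(G)`. -/
noncomputable def signlessLapSpecRad (G : SimpleGraph V) [Fintype V] [DecidableEq V]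
    [DecidableRel G.Adj] : ℝ :=
  sSup (spectrum ℝ (Matrix.diagonal (fun v => (G.degree v : ℝ)) + G.adjMatrix ℝ))

section AuxTau

variable (G : SimpleGraph V) [Fintype V]

private lemma transversal_univ' : IsTransversal G (Finset.univ : Finset V) :=
  fun u _ _ => Or.inl (Finset.mem_univ u)

private lemma tauNum_le' {T : Finset V} (hT : IsTransversal G T) : tauNum G ≤ T.card :=
  Nat.sInf_le ⟨T, rfl, hT⟩

private lemma exists_tauNum_transversal' :
    ∃ T : Finset V, T.card = tauNum G ∧ IsTransversal G T :=
  Nat.sInf_mem (⟨(Finset.univ : Finset V).card, Finset.univ, rfl, transversal_univ' G⟩ :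
    {k | ∃ T : Finset V, T.card = k ∧ IsTransversal G T}.Nonempty)

/-- For every edge `xy` of a τ-critical graph there is a set `S` of size at least
`n + 1 - τ` containing `x` and `y` whose only internal edge is `xy`. -/
private lemma exists_soleEdge (hcrit : IsTauCritical G) {x y : V} (hxy : G.Adj x y) :
    ∃ S : Finset V, x ∈ S ∧ y ∈ S ∧ Fintype.card V + 1 ≤ S.card + tauNum G ∧
      ∀ ⦃a b : V⦄, a ∈ S → b ∈ S → G.Adj a b → (a = x ∧ b = y) ∨ (a = y ∧ b = x) := by
  classical
  obtain ⟨T, hTcard, hT⟩ := exists_tauNum_transversal' (G.deleteEdges {s(x, y)})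
  have hlt : tauNum (G.deleteEdges {s(x, y)}) < tauNum G :=
    hcrit.2 _ (G.mem_edgeSet.mpr hxy)
  have hcover : ∀ ⦃a b : V⦄, G.Adj a b → ¬((a = x ∧ b = y) ∨ (a = y ∧ b = x)) →
      a ∈ T ∨ b ∈ T := by
    intro a b hab hne
    refine hT ?_
    rw [SimpleGraph.deleteEdges_adj]
    refine ⟨hab, ?_⟩
    simp only [Set.mem_singleton_iff, Sym2.eq_iff]
    exact hne
  have hxT : x ∉ T := by
    intro hmem
    have htr : IsTransversal G T := by
      intro a b hab
      by_cases h : (a = x ∧ b = y) ∨ (a = y ∧ b = x)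
      · rcases h with ⟨rfl, rfl⟩ | ⟨rfl, rfl⟩
        · exact Or.inl hmem
        · exact Or.inr hmem
      · exact hcover hab h
    have := tauNum_le' G htr
    omega
  have hyT : y ∉ T := by
    intro hmem
    have htr : IsTransversal G T := by
      intro a b hab
      by_cases h : (a = x ∧ b = y) ∨ (a = y ∧ b = x)
      · rcases h with ⟨rfl, rfl⟩ | ⟨rfl, rfl⟩
        · exact Or.inr hmem
        · exact Or.inl hmem
      · exact hcover hab h
    have := tauNum_le' G htr
    omega
  refine ⟨Finset.univ \ T, by simp [hxT], by simp [hyT], ?_, ?_⟩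
  · have h1 : (Finset.univ \ T).card = Fintype.card V - T.card := by
      rw [Finset.card_sdiff_of_subset (Finset.subset_univ _), Finset.card_univ]
    have h2 : T.card ≤ Fintype.card V := Finset.card_le_univ T
    omega
  · intro a b ha hb hab
    by_contra h
    rcases hcover hab h with h' | h'
    · exact (Finset.mem_sdiff.mp ha).2 h'
    · exact (Finset.mem_sdiff.mp hb).2 h'

variable [DecidableEq V] [DecidableRel G.Adj]

private def nbhd (I : Finset V) : Finset V :=
  Finset.univ.filter fun z => ∃ x ∈ I, G.Adj x z

private lemma mem_nbhd {I : Finset V} {z : V} : z ∈ nbhd G I ↔ ∃ x ∈ I, G.Adj x z := by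
  simp [nbhd]

/-- Key neighborhood lemma: in a τ-critical graph, for an independent set `I` none
of whose vertices is adjacent (or equal) to `v`, we have `|N(I) \ N(v)| ≥ |I|`. -/
private lemma card_le_nbhd_sdiff (hcrit : IsTauCritical G) (v : V) :
    ∀ I : Finset V, (∀ a ∈ I, ∀ b ∈ I, ¬ G.Adj a b) → (∀ x ∈ I, ¬ G.Adj v x) → v ∉ I →
      I.card ≤ (nbhd G I \ nbhd G {v}).card := by
  intro I
  induction I using Finset.strongInduction with
  | _ I ih =>
    intro hind hnv hvI
    by_contra hcon
    push_neg at hcon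
    set NI := nbhd G I with hNI
    set Nv := nbhd G {v} with hNv
    set B := NI \ Nv with hBdef
    obtain ⟨x₁, hx₁⟩ : I.Nonempty := by
      rcases I.eq_empty_or_nonempty with h | h
      · subst h; simp at hcon
      · exact h
    have hB_I : B.card + 1 = I.card := by
      have h1 := ih (I.erase x₁) (Finset.erase_ssubset hx₁)
        (fun a ha b hb => hind a (Finset.mem_of_mem_erase ha) b (Finset.mem_of_mem_erase hb))
        (fun a ha => hnv a (Finset.mem_of_mem_erase ha))
        (fun h => hvI (Finset.mem_of_mem_erase h))
      have h2 : nbhd G (I.erase x₁) \ Nv ⊆ B := by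
        refine Finset.sdiff_subset_sdiff ?_ (Finset.Subset.refl _)
        intro z hz
        rcases (mem_nbhd G).mp hz with ⟨u, hu, huz⟩
        exact (mem_nbhd G).mpr ⟨u, Finset.mem_of_mem_erase hu, huz⟩
      have h3 := Finset.card_le_card h2
      have h4 := Finset.card_erase_of_mem hx₁
      have h5 : 1 ≤ I.card := Finset.card_pos.mpr ⟨x₁, hx₁⟩
      omega
    -- Hall's theorem gives a matching from `I.erase x₀` into `B`
    have hall : ∀ x₀ ∈ I, ∃ F : V → V,
        Set.InjOn F (I.erase x₀ : Finset V) ∧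
        ∀ x' ∈ I.erase x₀, G.Adj x' (F x') ∧ F x' ∈ B := by
      intro x₀ hx₀
      have cond : ∀ s : Finset {z // z ∈ I.erase x₀},
          s.card ≤ (s.biUnion fun a => nbhd G {(a : V)} ∩ B).card := by
        intro s
        set J := s.image (Subtype.val) with hJ
        have hJsub : J ⊆ I.erase x₀ := by
          intro z hz
          rcases Finset.mem_image.mp hz with ⟨a, _, rfl⟩
          exact a.2
        have hJI : J ⊂ I := by
          refine (Finset.ssubset_iff_of_subset
            (fun z hz => Finset.mem_of_mem_erase (hJsub hz))).mpr ?_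
          exact ⟨x₀, hx₀, fun hmem => (Finset.mem_erase.mp (hJsub hmem)).1 rfl⟩
        have hJcard := ih J hJI
          (fun a ha b hb => hind a (hJI.1 ha) b (hJI.1 hb))
          (fun a ha => hnv a (hJI.1 ha))
          (fun h => hvI (hJI.1 h))
        have hsub : nbhd G J \ Nv ⊆ s.biUnion fun a => nbhd G {(a : V)} ∩ B := by
          intro z hz
          have hz1 := Finset.mem_sdiff.mp hz
          rcases (mem_nbhd G).mp hz1.1 with ⟨u, huJ, huz⟩
          rcases Finset.mem_image.mp huJ with ⟨a, has, rfl⟩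
          refine Finset.mem_biUnion.mpr ⟨a, has, Finset.mem_inter.mpr ⟨?_, ?_⟩⟩
          · exact (mem_nbhd G).mpr ⟨(a : V), Finset.mem_singleton_self _, huz⟩
          · exact Finset.mem_sdiff.mpr ⟨(mem_nbhd G).mpr ⟨(a : V), hJI.1 huJ, huz⟩, hz1.2⟩
        calc s.card = J.card := (Finset.card_image_of_injective s Subtype.val_injective).symm
          _ ≤ (nbhd G J \ Nv).card := hJcard
          _ ≤ _ := Finset.card_le_card hsub
      obtain ⟨f, hfinj, hft⟩ :=
        (Finset.all_card_le_biUnion_card_iff_exists_injective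
          (fun a : {z // z ∈ I.erase x₀} => nbhd G {(a : V)} ∩ B)).mp cond
      refine ⟨fun z => if h : z ∈ I.erase x₀ then f ⟨z, h⟩ else z, ?_, ?_⟩
      · intro a ha b hb hab
        have ha' : a ∈ I.erase x₀ := Finset.mem_coe.mp ha
        have hb' : b ∈ I.erase x₀ := Finset.mem_coe.mp hb
        simp only [dif_pos ha', dif_pos hb'] at hab
        have := hfinj hab
        exact congrArg Subtype.val this
      · intro x' hx'
        simp only [dif_pos hx']
        have h1 := hft ⟨x', hx'⟩
        have h2 := Finset.mem_inter.mp h1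
        refine ⟨?_, h2.2⟩
        rcases (mem_nbhd G).mp h2.1 with ⟨u, hu, huz⟩
        rw [Finset.mem_singleton.mp hu] at huz
        exact huz
    -- common finishing argument
    have finish : ∀ S : Finset V,
        Fintype.card V + 1 ≤ S.card + tauNum G →
        (∀ a ∈ S \ NI, ∀ b ∈ S \ NI, ¬ G.Adj a b) →
        (S ∩ NI).card + (I ∩ S).card ≤ I.card → False := by
      intro S hScard hSfree hcount
      set S' := (S \ NI) ∪ I with hS'def
      have hindep : ∀ a ∈ S', ∀ b ∈ S', ¬ G.Adj a b := by
        intro a ha b hb hab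
        rcases Finset.mem_union.mp ha with ha' | ha' <;>
          rcases Finset.mem_union.mp hb with hb' | hb'
        · exact hSfree a ha' b hb' hab
        · exact (Finset.mem_sdiff.mp ha').2 ((mem_nbhd G).mpr ⟨b, hb', hab.symm⟩)
        · exact (Finset.mem_sdiff.mp hb').2 ((mem_nbhd G).mpr ⟨a, ha', hab⟩)
        · exact hind a ha' b hb' hab
      have htrans : IsTransversal G (Finset.univ \ S') := by
        intro a b hab
        by_contra hcon2
        push_neg at hcon2
        have ha : a ∈ S' := by
          have := hcon2.1
          simp only [Finset.mem_sdiff, Finset.mem_univ, true_and, not_not] at this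
          exact this
        have hb : b ∈ S' := by
          have := hcon2.2
          simp only [Finset.mem_sdiff, Finset.mem_univ, true_and, not_not] at this
          exact this
        exact hindep a ha b hb hab
      have hle := tauNum_le' G htrans
      have e1 : (S \ NI).card + (S ∩ NI).card = S.card := Finset.card_sdiff_add_card_inter S NI
      have e2 : S'.card + ((S \ NI) ∩ I).card = (S \ NI).card + I.card :=
        Finset.card_union_add_card_inter _ _
      have e3 : (S \ NI) ∩ I = I ∩ S := by
        ext z
        simp only [Finset.mem_inter, Finset.mem_sdiff]
        constructor
        · rintro ⟨⟨h1, _⟩, h3⟩; exact ⟨h3, h1⟩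
        · rintro ⟨h1, h2⟩
          refine ⟨⟨h2, fun hzNI => ?_⟩, h1⟩
          rcases (mem_nbhd G).mp hzNI with ⟨u, huI, huz⟩
          exact hind u huI z h1 huz
      have e4 : (Finset.univ \ S').card = Fintype.card V - S'.card := by
        rw [Finset.card_sdiff_of_subset (Finset.subset_univ _), Finset.card_univ]
      have e5 : S'.card ≤ Fintype.card V := Finset.card_le_univ _
      rw [e3] at e2
      omega
    rcases (NI ∩ Nv).eq_empty_or_nonempty with hQ | hQ
    · -- Case 1 : no neighbor of `I` is a neighbor of `v`.
      obtain ⟨y, hy⟩ := hcrit.1 x₁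
      have hyNI : y ∈ NI := (mem_nbhd G).mpr ⟨x₁, hx₁, hy⟩
      have hyB : y ∈ B := by
        refine Finset.mem_sdiff.mpr ⟨hyNI, fun hyNv => ?_⟩
        have : y ∈ NI ∩ Nv := Finset.mem_inter.mpr ⟨hyNI, hyNv⟩
        rw [hQ] at this
        simp at this
      obtain ⟨S, hxS, hyS, hScard, hsole⟩ := exists_soleEdge G hcrit hy
      obtain ⟨F, hFinj, hF⟩ := hall x₁ hx₁
      have hmap : ∀ z ∈ (I ∩ S).erase x₁, F z ∈ B \ S := by
        intro z hz
        obtain ⟨hzx, hzIS⟩ := Finset.mem_erase.mp hz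
        obtain ⟨hzI, hzS⟩ := Finset.mem_inter.mp hzIS
        have hzer : z ∈ I.erase x₁ := Finset.mem_erase.mpr ⟨hzx, hzI⟩
        obtain ⟨hadj, hFB⟩ := hF z hzer
        refine Finset.mem_sdiff.mpr ⟨hFB, fun hFS => ?_⟩
        rcases hsole hzS hFS hadj with ⟨h1, _⟩ | ⟨h1, _⟩
        · exact hzx h1
        · have hzNI : z ∈ NI := by rw [h1]; exact hyNI
          rcases (mem_nbhd G).mp hzNI with ⟨u, huI, huz⟩
          exact hind u huI z hzI huz
      have hinj2 : ((I ∩ S).erase x₁).card ≤ (B \ S).card := by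
        refine Finset.card_le_card_of_injOn F hmap (hFinj.mono ?_)
        refine Finset.coe_subset.mpr ?_
        intro z hz
        obtain ⟨hzx, hzIS⟩ := Finset.mem_erase.mp hz
        exact Finset.mem_erase.mpr ⟨hzx, (Finset.mem_inter.mp hzIS).1⟩
      have hx₁IS : x₁ ∈ I ∩ S := Finset.mem_inter.mpr ⟨hx₁, hxS⟩
      have hcer : ((I ∩ S).erase x₁).card + 1 = (I ∩ S).card := by
        rw [Finset.card_erase_of_mem hx₁IS]
        have := Finset.card_pos.mpr ⟨x₁, hx₁IS⟩
        omega
      have hsplit : S ∩ NI ⊆ S ∩ B := by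
        intro z hz
        obtain ⟨hzS, hzNI⟩ := Finset.mem_inter.mp hz
        refine Finset.mem_inter.mpr ⟨hzS, Finset.mem_sdiff.mpr ⟨hzNI, fun hzNv => ?_⟩⟩
        have : z ∈ NI ∩ Nv := Finset.mem_inter.mpr ⟨hzNI, hzNv⟩
        rw [hQ] at this
        simp at this
      have c1 : (B \ S).card + (B ∩ S).card = B.card := Finset.card_sdiff_add_card_inter B S
      have c2 : (S ∩ B).card = (B ∩ S).card := by rw [Finset.inter_comm]
      have c3 := Finset.card_le_card hsplit
      refine finish S hScard ?_ (by omega)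
      intro a ha b hb hab
      rcases hsole (Finset.mem_sdiff.mp ha).1 (Finset.mem_sdiff.mp hb).1 hab with
        ⟨_, h2⟩ | ⟨h2, _⟩
      · exact (Finset.mem_sdiff.mp hb).2 (by rw [h2]; exact hyNI)
      · exact (Finset.mem_sdiff.mp ha).2 (by rw [h2]; exact hyNI)
    · -- Case 2 : some neighbor `w` of `I` is also a neighbor of `v`.
      obtain ⟨w, hw⟩ := hQ
      obtain ⟨hwNI, hwNv⟩ := Finset.mem_inter.mp hw
      have hvw : G.Adj v w := by
        rcases (mem_nbhd G).mp hwNv with ⟨u, hu, huw⟩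
        rw [Finset.mem_singleton.mp hu] at huw
        exact huw
      obtain ⟨x₀, hx₀I, hx₀w⟩ := (mem_nbhd G).mp hwNI
      obtain ⟨S, hvS, hwS, hScard, hsole⟩ := exists_soleEdge G hcrit hvw
      have hx₀S : x₀ ∉ S := by
        intro hmem
        rcases hsole hmem hwS hx₀w with ⟨h1, _⟩ | ⟨_, h2⟩
        · exact hvI (by rw [← h1]; exact hx₀I)
        · exact G.loopless.irrefl v (by rw [h2] at hvw; exact hvw)
      obtain ⟨F, hFinj, hF⟩ := hall x₀ hx₀I
      have hIS_sub : I ∩ S ⊆ I.erase x₀ := by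
        intro z hz
        obtain ⟨hzI, hzS⟩ := Finset.mem_inter.mp hz
        exact Finset.mem_erase.mpr ⟨fun h => hx₀S (by rw [← h]; exact hzS), hzI⟩
      have hmap : ∀ z ∈ I ∩ S, F z ∈ B \ S := by
        intro z hz
        obtain ⟨hzI, hzS⟩ := Finset.mem_inter.mp hz
        obtain ⟨hadj, hFB⟩ := hF z (hIS_sub hz)
        refine Finset.mem_sdiff.mpr ⟨hFB, fun hFS => ?_⟩
        rcases hsole hzS hFS hadj with ⟨h1, _⟩ | ⟨h1, _⟩
        · exact hvI (by rw [← h1]; exact hzI)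
        · exact hnv z hzI (by rw [h1]; exact hvw)
      have hinj2 : (I ∩ S).card ≤ (B \ S).card :=
        Finset.card_le_card_of_injOn F hmap (hFinj.mono (Finset.coe_subset.mpr hIS_sub))
      have hQsub : S ∩ NI ⊆ (S ∩ B) ∪ {w} := by
        intro z hz
        obtain ⟨hzS, hzNI⟩ := Finset.mem_inter.mp hz
        by_cases hzNv : z ∈ Nv
        · have hadj : G.Adj v z := by
            rcases (mem_nbhd G).mp hzNv with ⟨u, hu, huz⟩
            rw [Finset.mem_singleton.mp hu] at huz
            exact huz
          rcases hsole hvS hzS hadj with ⟨_, h2⟩ | ⟨h2, _⟩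
          · exact Finset.mem_union_right _ (Finset.mem_singleton.mpr h2)
          · exact absurd (by rw [h2] at hvw; exact hvw) (G.loopless.irrefl w)
        · exact Finset.mem_union_left _
            (Finset.mem_inter.mpr ⟨hzS, Finset.mem_sdiff.mpr ⟨hzNI, hzNv⟩⟩)
      have c0 := Finset.card_le_card hQsub
      have c1 := Finset.card_union_le (S ∩ B) ({w} : Finset V)
      have c2 : (S ∩ B).card = (B ∩ S).card := by rw [Finset.inter_comm]
      have c3 : (B \ S).card + (B ∩ S).card = B.card := Finset.card_sdiff_add_card_inter B S
      have csing : ({w} : Finset V).card = 1 := Finset.card_singleton w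
      refine finish S hScard ?_ (by omega)
      intro a ha b hb hab
      rcases hsole (Finset.mem_sdiff.mp ha).1 (Finset.mem_sdiff.mp hb).1 hab with
        ⟨_, h2⟩ | ⟨h2, _⟩
      · exact (Finset.mem_sdiff.mp hb).2 (by rw [h2]; exact hwNI)
      · exact (Finset.mem_sdiff.mp ha).2 (by rw [h2]; exact hwNI)

/-- Hajnal's degree bound for τ-critical graphs: `d(v) + n ≤ 2τ + 1`. -/
private lemma deg_bound (hcrit : IsTauCritical G) (v : V) :
    G.degree v + Fintype.card V ≤ 2 * tauNum G + 1 := by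
  obtain ⟨u₀, hu₀⟩ := hcrit.1 v
  obtain ⟨S₀, hvS, huS, hScard, hsole⟩ := exists_soleEdge G hcrit hu₀
  have hvu : v ≠ u₀ := hu₀.ne
  set I := (S₀.erase v).erase u₀ with hIdef
  have hu₀' : u₀ ∈ S₀.erase v := Finset.mem_erase.mpr ⟨fun h => hvu h.symm, huS⟩
  have hIcard : I.card + 2 = S₀.card := by
    rw [hIdef, Finset.card_erase_of_mem hu₀', Finset.card_erase_of_mem hvS]
    have h1 : 1 ≤ (S₀.erase v).card := Finset.card_pos.mpr ⟨u₀, hu₀'⟩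
    have h2 := Finset.card_erase_of_mem hvS
    have h3 : 1 ≤ S₀.card := Finset.card_pos.mpr ⟨v, hvS⟩
    omega
  have hIS₀ : I ⊆ S₀ := fun z hz => Finset.mem_of_mem_erase (Finset.mem_of_mem_erase hz)
  have hzneq : ∀ z ∈ I, z ≠ v ∧ z ≠ u₀ := by
    intro z hz
    exact ⟨(Finset.mem_erase.mp (Finset.mem_of_mem_erase hz)).1, (Finset.mem_erase.mp hz).1⟩
  have hind : ∀ a ∈ I, ∀ b ∈ I, ¬ G.Adj a b := by
    intro a ha b hb hab
    rcases hsole (hIS₀ ha) (hIS₀ hb) hab with ⟨h1, _⟩ | ⟨h1, _⟩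
    · exact (hzneq a ha).1 h1
    · exact (hzneq a ha).2 h1
  have hnv : ∀ x ∈ I, ¬ G.Adj v x := by
    intro x hx hadj
    rcases hsole hvS (hIS₀ hx) hadj with ⟨_, h2⟩ | ⟨h2, _⟩
    · exact (hzneq x hx).2 h2
    · exact hvu h2
  have hvI : v ∉ I := fun h => (hzneq v h).1 rfl
  have hmain := card_le_nbhd_sdiff G hcrit v I hind hnv hvI
  have hdisj : Disjoint (nbhd G I \ nbhd G {v}) (S₀ ∪ nbhd G {v}) := by
    rw [Finset.disjoint_left]
    intro z hz hz2
    obtain ⟨hzNI, hzNv⟩ := Finset.mem_sdiff.mp hz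
    rcases Finset.mem_union.mp hz2 with hzS | hzNv'
    · rcases (mem_nbhd G).mp hzNI with ⟨u, huI, huz⟩
      rcases hsole (hIS₀ huI) hzS huz with ⟨h1, _⟩ | ⟨h1, _⟩
      · exact (hzneq u huI).1 h1
      · exact (hzneq u huI).2 h1
    · exact hzNv hzNv'
  have hcard1 : (nbhd G I \ nbhd G {v}).card + (S₀ ∪ nbhd G {v}).card ≤ Fintype.card V := by
    rw [← Finset.card_union_of_disjoint hdisj]
    exact Finset.card_le_univ _
  have hcard2 : (S₀ ∪ nbhd G {v}).card + (S₀ ∩ nbhd G {v}).card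
      = S₀.card + (nbhd G {v}).card := Finset.card_union_add_card_inter _ _
  have hinter : S₀ ∩ nbhd G {v} = {u₀} := by
    ext z
    simp only [Finset.mem_inter, Finset.mem_singleton]
    constructor
    · rintro ⟨hzS, hzNv⟩
      have hadj : G.Adj v z := by
        rcases (mem_nbhd G).mp hzNv with ⟨u, hu, huz⟩
        rw [Finset.mem_singleton.mp hu] at huz
        exact huz
      rcases hsole hvS hzS hadj with ⟨_, h2⟩ | ⟨h2, _⟩
      · exact h2
      · exact absurd h2 hvu
    · rintro rfl
      exact ⟨huS, (mem_nbhd G).mpr ⟨v, Finset.mem_singleton_self v, hu₀⟩⟩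
  have hdeg : (nbhd G {v}).card = G.degree v := by
    have h : nbhd G {v} = G.neighborFinset v := by
      ext z
      simp [mem_nbhd, SimpleGraph.mem_neighborFinset]
    rw [h]
    exact G.card_neighborFinset_eq_degree v
  rw [hinter] at hcard2
  simp only [Finset.card_singleton] at hcard2
  omega

end AuxTau

/-- For a τ-critical graph `G` with `τ(G) = t`, `|V(G)| = n`, and a
nonnegative integer `r ≤ t`, we have `r·|V(G)| + |E(G)| ≤ (t+r+1 choose 2)`. -/
theorem tau_critical_r_card_add_edges_le (G : SimpleGraph V) [Fintype V] [DecidableRel G.Adj]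
    (t n r : ℕ) (hcrit : IsTauCritical G) (ht : tauNum G = t)
    (hn : Fintype.card V = n) (hr : r ≤ t) :
    r * n + G.edgeFinset.card ≤ (t + r + 1).choose 2 := by
  classical
  subst ht
  subst hn
  have hdeg : ∀ v : V, G.degree v + Fintype.card V ≤ 2 * tauNum G + 1 :=
    fun v => deg_bound G hcrit v
  have hsum : ∑ v, G.degree v = 2 * G.edgeFinset.card := G.sum_degrees_eq_twice_card_edges
  set n := Fintype.card V with hn'
  set t := tauNum G with ht'
  set e := G.edgeFinset.card with he'
  have h2 : 2 * e + n * n ≤ n * (2 * t + 1) := by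
    have h := Finset.sum_le_sum (fun v (_ : v ∈ Finset.univ) => hdeg v)
    rw [Finset.sum_add_distrib, Finset.sum_const, Finset.sum_const] at h
    simp only [smul_eq_mul, Finset.card_univ] at h
    rw [hsum, ← hn'] at h
    omega
  rw [Nat.choose_two_right]
  have hsimp : t + r + 1 - 1 = t + r := by omega
  rw [hsimp]
  rw [Nat.le_div_iff_mul_le (by norm_num : 0 < 2)]
  have key : ((n : ℤ) - (t + r)) ≤ ((n : ℤ) - (t + r)) * ((n : ℤ) - (t + r)) := by
    rcases le_or_gt ((n : ℤ) - (t + r)) 0 with h | h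
    · exact h.trans (mul_self_nonneg _)
    · nlinarith
  have h2' : (2 * e + n * n : ℤ) ≤ n * (2 * t + 1) := by exact_mod_cast h2
  have hfin : ((r * n + e) * 2 : ℤ) ≤ (t + r + 1) * (t + r) := by nlinarith [key, h2']
  exact_mod_cast hfin
end

section
/- Let G be a τ-critical graph with τ(G) = t and |V(G)| = n. Then the degree d(v) ≤ 2t + 1 − n for every vertex v ∈ V(G). -/
open SimpleGraph

variable {V : Type*}

section Helpers

open Finset

variable [Fintype V]

lemma exists_min_transversal (G : SimpleGraph V) :
    ∃ T : Finset V, T.card = tauNum G ∧ IsTransversal G T := by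
  have hne : {k | ∃ T : Finset V, T.card = k ∧ IsTransversal G T}.Nonempty :=
    ⟨(Finset.univ : Finset V).card, Finset.univ, rfl, fun u v _ => Or.inl (Finset.mem_univ u)⟩
  exact Nat.sInf_mem hne

lemma tauNum_le_card {G : SimpleGraph V} {T : Finset V} (hT : IsTransversal G T) :
    tauNum G ≤ T.card :=
  Nat.sInf_le ⟨T, rfl, hT⟩

/-- complement of an independent set is a transversal. -/
lemma indep_compl_transversal {G : SimpleGraph V} {W : Finset V}
    (hW : ∀ a ∈ W, ∀ b ∈ W, ¬ G.Adj a b) :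
    tauNum G + W.card ≤ Fintype.card V := by
  classical
  have htr : IsTransversal G (Finset.univ \ W) := by
    intro p q hpq
    by_cases hp : p ∈ W
    · by_cases hq : q ∈ W
      · exact absurd hpq (hW p hp q hq)
      · exact Or.inr (Finset.mem_sdiff.2 ⟨Finset.mem_univ _, hq⟩)
    · exact Or.inl (Finset.mem_sdiff.2 ⟨Finset.mem_univ _, hp⟩)
  have h1 := tauNum_le_card htr
  have h2 : (Finset.univ \ W).card + W.card = Fintype.card V := by
    rw [Finset.card_sdiff_add_card_eq_card (Finset.subset_univ W), Finset.card_univ]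
  omega

/-- extraction of a near-minimum transversal from criticality. -/
lemma crit_extract {G : SimpleGraph V} (hcrit : IsTauCritical G) {a b : V} (hab : G.Adj a b) :
    ∃ T : Finset V, T.card + 1 = tauNum G ∧ a ∉ T ∧ b ∉ T ∧
      ∀ ⦃p q : V⦄, G.Adj p q → s(p, q) ≠ s(a, b) → p ∈ T ∨ q ∈ T := by
  classical
  obtain ⟨T, hTcard, hTtr⟩ := exists_min_transversal (G.deleteEdges {s(a, b)})
  have hdel : tauNum (G.deleteEdges {s(a, b)}) < tauNum G :=
    hcrit.2 _ (G.mem_edgeSet.2 hab)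
  have hcov : ∀ ⦃p q : V⦄, G.Adj p q → s(p, q) ≠ s(a, b) → p ∈ T ∨ q ∈ T := by
    intro p q hpq hne
    exact hTtr (by rw [SimpleGraph.deleteEdges_adj]; exact ⟨hpq, by simpa using hne⟩)
  have haT : a ∉ T := by
    intro haT
    have htrG : IsTransversal G T := by
      intro p q hpq
      by_cases hne : s(p, q) = s(a, b)
      · rcases Sym2.eq_iff.1 hne with ⟨rfl, rfl⟩ | ⟨rfl, rfl⟩
        · exact Or.inl haT
        · exact Or.inr haT
      · exact hcov hpq hne
    have := tauNum_le_card htrG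
    omega
  have hbT : b ∉ T := by
    intro hbT
    have htrG : IsTransversal G T := by
      intro p q hpq
      by_cases hne : s(p, q) = s(a, b)
      · rcases Sym2.eq_iff.1 hne with ⟨rfl, rfl⟩ | ⟨rfl, rfl⟩
        · exact Or.inr hbT
        · exact Or.inl hbT
      · exact hcov hpq hne
    have := tauNum_le_card htrG
    omega
  refine ⟨T, ?_, haT, hbT, hcov⟩
  have hle : tauNum G ≤ T.card + 1 := by
    have htrG : IsTransversal G (insert a T) := by
      intro p q hpq
      by_cases hne : s(p, q) = s(a, b)
      · rcases Sym2.eq_iff.1 hne with ⟨rfl, rfl⟩ | ⟨rfl, rfl⟩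
        · exact Or.inl (Finset.mem_insert_self _ _)
        · exact Or.inr (Finset.mem_insert_self _ _)
      · rcases hcov hpq hne with h | h
        · exact Or.inl (Finset.mem_insert_of_mem h)
        · exact Or.inr (Finset.mem_insert_of_mem h)
    have := tauNum_le_card htrG
    have hcard : (insert a T).card = T.card + 1 := Finset.card_insert_of_notMem haT
    omega
  omega

/-- The contradiction builder: a cheap transversal from an exchange set. -/
lemma build_contra [DecidableEq V] {G : SimpleGraph V} {T' A X : Finset V}
    (htau : T'.card + 1 = tauNum G)
    (hAX : A ⊆ X)
    (hNX : ∀ a ∈ A, ∀ z : V, G.Adj a z → z ∈ X)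
    (hAind : ∀ a ∈ A, ∀ b ∈ A, ¬ G.Adj a b)
    (hI : ∀ p q : V, p ∉ T' → q ∉ T' → G.Adj p q → p ∈ X ∨ q ∈ X)
    (hcount : ((Finset.univ \ T') ∩ X).card ≤ A.card) : False := by
  classical
  set I : Finset V := Finset.univ \ T' with hIdef
  set W : Finset V := (I \ X) ∪ A with hWdef
  have hWind : ∀ p ∈ W, ∀ q ∈ W, ¬ G.Adj p q := by
    intro p hp q hq hadj
    rcases Finset.mem_union.1 hp with hp' | hp' <;> rcases Finset.mem_union.1 hq with hq' | hq'
    · have hpT : p ∉ T' := (Finset.mem_sdiff.1 (Finset.mem_sdiff.1 hp').1).2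
      have hqT : q ∉ T' := (Finset.mem_sdiff.1 (Finset.mem_sdiff.1 hq').1).2
      rcases hI p q hpT hqT hadj with h | h
      · exact (Finset.mem_sdiff.1 hp').2 h
      · exact (Finset.mem_sdiff.1 hq').2 h
    · exact (Finset.mem_sdiff.1 hp').2 (hNX q hq' p hadj.symm)
    · exact (Finset.mem_sdiff.1 hq').2 (hNX p hp' q hadj)
    · exact hAind p hp' q hq' hadj
  have h1 := indep_compl_transversal hWind
  have hdisj : Disjoint (I \ X) A := by
    rw [Finset.disjoint_left]
    intro p hp hpA
    exact (Finset.mem_sdiff.1 hp).2 (hAX hpA)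
  have hWcard : W.card = (I \ X).card + A.card := Finset.card_union_of_disjoint hdisj
  have h2 : (I ∩ X).card + (I \ X).card = I.card := Finset.card_inter_add_card_sdiff I X
  have h3 : I.card + T'.card = Fintype.card V := by
    rw [hIdef, Finset.card_sdiff_add_card_eq_card (Finset.subset_univ T'), Finset.card_univ]
  omega

end Helpers

section KeyLemma

open Finset

variable [Fintype V] [DecidableEq V]

/-- Hajnal's lemma, avoiding the neighborhood of a fixed vertex `v`:
for an independent set `A` disjoint from `N[v]`, `|N(A) \ N(v)| ≥ |A|`. -/
lemma hajnal_lemma {G : SimpleGraph V} [DecidableRel G.Adj]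
    (hcrit : IsTauCritical G) (v : V) :
    ∀ (n : ℕ) (A : Finset V), A.card ≤ n →
      (∀ a ∈ A, ∀ b ∈ A, ¬ G.Adj a b) →
      (∀ a ∈ A, ¬ G.Adj v a) → v ∉ A →
      A.card ≤ ((A.biUnion fun x => G.neighborFinset x) \ G.neighborFinset v).card := by
  intro n
  induction n with
  | zero =>
    intro A hA _ _ _
    simp [Nat.le_zero.1 hA]
  | succ n ih =>
    intro A hAle hAind hAv hvA
    by_cases hsmall : A.card ≤ n
    · exact ih A hsmall hAind hAv hvA
    have hAcard : A.card = n + 1 := by omega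
    by_contra hlt'
    push_neg at hlt'
    set NA : Finset V := A.biUnion fun x => G.neighborFinset x with hNAdef
    set NB : Finset V := NA \ G.neighborFinset v with hNBdef
    -- `NA` is disjoint from `A`
    have hNAA : ∀ z ∈ NA, z ∉ A := by
      intro z hz hzA
      obtain ⟨x, hx, hzx⟩ := Finset.mem_biUnion.1 hz
      exact hAind x hx z hzA ((G.mem_neighborFinset x z).1 hzx)
    -- `A` avoids N(v)
    have hAnv : ∀ a ∈ A, a ∉ G.neighborFinset v := by
      intro a ha hmem
      exact hAv a ha ((G.mem_neighborFinset v a).1 hmem)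
    -- Hall's theorem applied to `A.erase a`
    have key : ∀ a ∈ A, ∃ f : {x // x ∈ A.erase a} → V,
        Function.Injective f ∧ ∀ x : {x // x ∈ A.erase a},
          f x ∈ G.neighborFinset (x : V) \ G.neighborFinset v := by
      intro a ha
      refine (Finset.all_card_le_biUnion_card_iff_exists_injective
        (fun x : {x // x ∈ A.erase a} =>
          G.neighborFinset (x : V) \ G.neighborFinset v)).1 ?_
      intro s
      set s0 : Finset V := s.image (fun x : {x // x ∈ A.erase a} => (x : V)) with hs0
      have hs0card : s0.card = s.card :=
        Finset.card_image_of_injective _ Subtype.val_injective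
      have hs0subA : s0 ⊆ A := by
        intro z hz
        obtain ⟨x, _, rfl⟩ := Finset.mem_image.1 hz
        exact Finset.mem_of_mem_erase x.2
      have hs0sub' : s0 ⊆ A.erase a := by
        intro z hz
        obtain ⟨x, _, rfl⟩ := Finset.mem_image.1 hz
        exact x.2
      have hs0n : s0.card ≤ n := by
        have := Finset.card_le_card hs0sub'
        have := Finset.card_erase_of_mem ha
        omega
      have hIH := ih s0 hs0n
        (fun a ha b hb => hAind a (hs0subA ha) b (hs0subA hb))
        (fun a ha => hAv a (hs0subA ha))
        (fun hv => hvA (hs0subA hv))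
      have hbieq : (s.biUnion fun x : {x // x ∈ A.erase a} =>
          G.neighborFinset (x : V) \ G.neighborFinset v)
          = (s0.biUnion fun z => G.neighborFinset z) \ G.neighborFinset v := by
        ext w
        simp only [Finset.mem_biUnion, Finset.mem_sdiff, Finset.mem_image, hs0]
        constructor
        · rintro ⟨x, hx, hw, hwv⟩
          exact ⟨⟨x, ⟨x, hx, rfl⟩, hw⟩, hwv⟩
        · rintro ⟨⟨z, ⟨x, hx, rfl⟩, hw⟩, hwv⟩
          exact ⟨x, hx, hw, hwv⟩
      rw [hbieq, ← hs0card]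
      exact hIH
    -- case distinction: is some neighbor of `v` adjacent to `A`?
    by_cases hy : ∃ y a, a ∈ A ∧ G.Adj v y ∧ G.Adj a y
    · -- CASE 1
      obtain ⟨y, a, ha, hvy, hay⟩ := hy
      obtain ⟨f, hfinj, hfmem⟩ := key a ha
      -- the image of f is exactly NB
      have himgsub : (Finset.univ.image f) ⊆ NB := by
        intro z hz
        obtain ⟨x, _, rfl⟩ := Finset.mem_image.1 hz
        have h1 := Finset.mem_sdiff.1 (hfmem x)
        refine Finset.mem_sdiff.2 ⟨?_, h1.2⟩
        exact Finset.mem_biUnion.2 ⟨(x : V), Finset.mem_of_mem_erase x.2, h1.1⟩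
      have himgcard : (Finset.univ.image f).card = n := by
        rw [Finset.card_image_of_injective _ hfinj, Finset.card_univ,
          Fintype.card_coe, Finset.card_erase_of_mem ha, hAcard]
        omega
      have himg : (Finset.univ.image f) = NB := by
        apply Finset.eq_of_subset_of_card_le himgsub
        omega
      have hsurj : ∀ z ∈ NB, ∃ x : {x // x ∈ A.erase a}, f x = z := by
        intro z hz
        rw [← himg] at hz
        obtain ⟨x, _, hfx⟩ := Finset.mem_image.1 hz
        exact ⟨x, hfx⟩
      -- criticality on the edge v-y
      obtain ⟨T', hT'card, hvT', hyT', hcov⟩ := crit_extract hcrit hvy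
      set X : Finset V := A ∪ NA with hXdef
      have hyNA : y ∈ NA := Finset.mem_biUnion.2 ⟨a, ha, (G.mem_neighborFinset a y).2 hay⟩
      have hyA : y ∉ A := fun h => hAv y h hvy
      -- no f-value equals y
      have hfy : ∀ x : {x // x ∈ A.erase a}, f x ≠ y := by
        intro x hx
        have := (Finset.mem_sdiff.1 (hfmem x)).2
        rw [hx] at this
        exact this ((G.mem_neighborFinset v y).2 hvy)
      -- a is not in I
      have haT' : a ∈ T' := by
        by_contra haT'
        have hne : s(a, y) ≠ s(v, y) := by
          intro hEq
          rcases Sym2.eq_iff.1 hEq with ⟨h1, _⟩ | ⟨h1, _⟩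
          · exact hvA (h1 ▸ ha)
          · exact hyA (h1 ▸ ha)
        rcases hcov hay hne with h | h
        · exact haT' h
        · exact hyT' h
      -- classification of elements of I ∩ X
      have hclass : ∀ z, z ∉ T' → z ∈ X →
          z ∈ A ∨ (∃ x : {x // x ∈ A.erase a}, f x = z) ∨ z = y := by
        intro z hzT hzX
        by_cases hzA : z ∈ A
        · exact Or.inl hzA
        have hzNA : z ∈ NA := by
          rcases Finset.mem_union.1 hzX with h | h
          · exact absurd h hzA
          · exact h
        by_cases hznv : z ∈ G.neighborFinset v
        · right; right
          have hvz : G.Adj v z := (G.mem_neighborFinset v z).1 hznv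
          by_contra hzy
          have hne : s(v, z) ≠ s(v, y) := by
            intro hEq
            rcases Sym2.eq_iff.1 hEq with ⟨_, h2⟩ | ⟨h1, _⟩
            · exact hzy h2
            · exact G.ne_of_adj hvy h1
          rcases hcov hvz hne with h | h
          · exact hvT' h
          · exact hzT h
        · right; left
          exact hsurj z (Finset.mem_sdiff.2 ⟨hzNA, hznv⟩)
      -- value map g
      set g : V → V := fun z =>
        if z ∈ A then z
        else if h : ∃ x : {x // x ∈ A.erase a}, f x = z then ((Classical.choose h : {x // x ∈ A.erase a}) : V)
        else a with hgdef
      -- facts about g values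
      have hgA : ∀ z ∈ (Finset.univ \ T') ∩ X, g z ∈ A := by
        intro z hz
        have hzT : z ∉ T' := (Finset.mem_sdiff.1 (Finset.mem_inter.1 hz).1).2
        have hzX : z ∈ X := (Finset.mem_inter.1 hz).2
        rcases hclass z hzT hzX with h | h | h
        · simp [hgdef, h]
        · have hzA : z ∉ A := by
            intro hzA
            obtain ⟨x, hx⟩ := h
            have := himgsub (Finset.mem_image.2 ⟨x, Finset.mem_univ x, hx⟩)
            exact hNAA z (Finset.mem_sdiff.1 this).1 hzA
          simp only [hgdef, if_neg hzA, dif_pos h]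
          exact Finset.mem_of_mem_erase (Classical.choose h).2
        · subst h
          have hnf : ¬ ∃ x : {x // x ∈ A.erase a}, f x = z := by
            rintro ⟨x, hx⟩; exact hfy x hx
          simp only [hgdef, if_neg hyA, dif_neg hnf]
          exact ha
      -- key adjacency facts for injectivity
      have hvalB : ∀ z, z ∉ T' → (h : ∃ x : {x // x ∈ A.erase a}, f x = z) → z ∉ A →
          ((Classical.choose h : {x // x ∈ A.erase a}) : V) ∈ T' ∧
          ((Classical.choose h : {x // x ∈ A.erase a}) : V) ≠ a := by
        intro z hzT h hzA
        set x := Classical.choose h with hxdef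
        have hfx : f x = z := Classical.choose_spec h
        have hwA : (x : V) ∈ A.erase a := x.2
        have hwa : (x : V) ≠ a := Finset.ne_of_mem_erase hwA
        have hadj : G.Adj (x : V) z := by
          have := (Finset.mem_sdiff.1 (hfmem x)).1
          rw [hfx] at this
          exact (G.mem_neighborFinset _ _).1 this
        refine ⟨?_, hwa⟩
        by_contra hwT
        have hne : s((x : V), z) ≠ s(v, y) := by
          intro hEq
          rcases Sym2.eq_iff.1 hEq with ⟨h1, _⟩ | ⟨h1, _⟩
          · exact hvA (h1 ▸ Finset.mem_of_mem_erase hwA)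
          · exact hyA (h1 ▸ Finset.mem_of_mem_erase hwA)
        rcases hcov hadj hne with hh | hh
        · exact hwT hh
        · exact hzT hh
      -- injectivity on I ∩ X
      have hinj : Set.InjOn g ↑((Finset.univ \ T') ∩ X) := by
        intro z1 hz1 z2 hz2 heq
        simp only [Finset.coe_inter, Set.mem_inter_iff, Finset.mem_coe] at hz1 hz2
        have hz1T : z1 ∉ T' := (Finset.mem_sdiff.1 hz1.1).2
        have hz2T : z2 ∉ T' := (Finset.mem_sdiff.1 hz2.1).2
        have hz1X : z1 ∈ X := hz1.2
        have hz2X : z2 ∈ X := hz2.2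
        -- helper: y ∉ A, and z ∈ A cases give g z = z
        rcases hclass z1 hz1T hz1X with h1 | h1 | h1 <;>
          rcases hclass z2 hz2T hz2X with h2 | h2 | h2
        · simpa [hgdef, h1, h2] using heq
        · -- z1 ∈ A, z2 image: g z1 = z1 ∈ A... but g z2 ∈ T' while z1 ∉ T'
          exfalso
          have hz2A : z2 ∉ A := fun hc => hNAA z2 (by
            obtain ⟨x, hx⟩ := h2
            exact (Finset.mem_sdiff.1 (himgsub (Finset.mem_image.2 ⟨x, Finset.mem_univ x, hx⟩))).1) hc
          have hb := hvalB z2 hz2T h2 hz2A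
          rw [hgdef] at heq
          simp only [if_pos h1, if_neg hz2A, dif_pos h2] at heq
          rw [heq] at hz1T
          exact hz1T hb.1
        · -- z1 ∈ A, z2 = y : g z2 = a ∈ T', g z1 = z1 ∉ T'
          exfalso
          subst h2
          have hnf : ¬ ∃ x : {x // x ∈ A.erase a}, f x = z2 := by
            rintro ⟨x, hx⟩; exact hfy x hx
          rw [hgdef] at heq
          simp only [if_pos h1, if_neg hyA, dif_neg hnf] at heq
          rw [heq] at hz1T
          exact hz1T haT'
        · exfalso
          have hz1A : z1 ∉ A := fun hc => hNAA z1 (by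
            obtain ⟨x, hx⟩ := h1
            exact (Finset.mem_sdiff.1 (himgsub (Finset.mem_image.2 ⟨x, Finset.mem_univ x, hx⟩))).1) hc
          have hb := hvalB z1 hz1T h1 hz1A
          rw [hgdef] at heq
          simp only [if_pos h2, if_neg hz1A, dif_pos h1] at heq
          rw [← heq] at hz2T
          exact hz2T hb.1
        · -- both images
          have hz1A : z1 ∉ A := fun hc => hNAA z1 (by
            obtain ⟨x, hx⟩ := h1
            exact (Finset.mem_sdiff.1 (himgsub (Finset.mem_image.2 ⟨x, Finset.mem_univ x, hx⟩))).1) hc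
          have hz2A : z2 ∉ A := fun hc => hNAA z2 (by
            obtain ⟨x, hx⟩ := h2
            exact (Finset.mem_sdiff.1 (himgsub (Finset.mem_image.2 ⟨x, Finset.mem_univ x, hx⟩))).1) hc
          rw [hgdef] at heq
          simp only [if_neg hz1A, if_neg hz2A, dif_pos h1, dif_pos h2] at heq
          have : Classical.choose h1 = Classical.choose h2 := Subtype.ext heq
          rw [← Classical.choose_spec h1, ← Classical.choose_spec h2, this]
        · -- z1 image, z2 = y : g z1 ∈ A.erase a ≠ a = g z2
          exfalso
          subst h2
          have hz1A : z1 ∉ A := fun hc => hNAA z1 (by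
            obtain ⟨x, hx⟩ := h1
            exact (Finset.mem_sdiff.1 (himgsub (Finset.mem_image.2 ⟨x, Finset.mem_univ x, hx⟩))).1) hc
          have hnf : ¬ ∃ x : {x // x ∈ A.erase a}, f x = z2 := by
            rintro ⟨x, hx⟩; exact hfy x hx
          have hb := hvalB z1 hz1T h1 hz1A
          rw [hgdef] at heq
          simp only [if_neg hz1A, if_neg hyA, dif_pos h1, dif_neg hnf] at heq
          exact hb.2 heq
        · -- z1 = y, z2 ∈ A
          exfalso
          subst h1
          have hnf : ¬ ∃ x : {x // x ∈ A.erase a}, f x = z1 := by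
            rintro ⟨x, hx⟩; exact hfy x hx
          rw [hgdef] at heq
          simp only [if_pos h2, if_neg hyA, dif_neg hnf] at heq
          rw [← heq] at hz2T
          exact hz2T haT'
        · exfalso
          subst h1
          have hz2A : z2 ∉ A := fun hc => hNAA z2 (by
            obtain ⟨x, hx⟩ := h2
            exact (Finset.mem_sdiff.1 (himgsub (Finset.mem_image.2 ⟨x, Finset.mem_univ x, hx⟩))).1) hc
          have hnf : ¬ ∃ x : {x // x ∈ A.erase a}, f x = z1 := by
            rintro ⟨x, hx⟩; exact hfy x hx
          have hb := hvalB z2 hz2T h2 hz2A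
          rw [hgdef] at heq
          simp only [if_neg hz2A, if_neg hyA, dif_pos h2, dif_neg hnf] at heq
          exact hb.2 heq.symm
        · rw [h1, h2]
      have hcount : ((Finset.univ \ T') ∩ X).card ≤ A.card :=
        Finset.card_le_card_of_injOn g hgA hinj
      -- apply build_contra
      refine build_contra hT'card (Finset.subset_union_left) ?_ hAind ?_ hcount
      · intro a' ha' z hadj
        exact Finset.mem_union.2 (Or.inr
          (Finset.mem_biUnion.2 ⟨a', ha', (G.mem_neighborFinset a' z).2 hadj⟩))
      · intro p q hpT hqT hadj
        by_cases hne : s(p, q) = s(v, y)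
        · rcases Sym2.eq_iff.1 hne with ⟨rfl, rfl⟩ | ⟨rfl, rfl⟩
          · exact Or.inr (Finset.mem_union.2 (Or.inr hyNA))
          · exact Or.inl (Finset.mem_union.2 (Or.inr hyNA))
        · rcases hcov hadj hne with h | h
          · exact absurd h hpT
          · exact absurd h hqT
    · -- CASE 2 : N(A) ∩ N(v) = ∅
      push_neg at hy
      -- pick any a ∈ A and a neighbor x0
      have hAne : A.Nonempty := Finset.card_pos.1 (by omega)
      obtain ⟨a, ha⟩ := hAne
      obtain ⟨x0, hax0⟩ := hcrit.1 a
      obtain ⟨f, hfinj, hfmem⟩ := key a ha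
      have himgsub : (Finset.univ.image f) ⊆ NB := by
        intro z hz
        obtain ⟨x, _, rfl⟩ := Finset.mem_image.1 hz
        have h1 := Finset.mem_sdiff.1 (hfmem x)
        refine Finset.mem_sdiff.2 ⟨?_, h1.2⟩
        exact Finset.mem_biUnion.2 ⟨(x : V), Finset.mem_of_mem_erase x.2, h1.1⟩
      have himgcard : (Finset.univ.image f).card = n := by
        rw [Finset.card_image_of_injective _ hfinj, Finset.card_univ,
          Fintype.card_coe, Finset.card_erase_of_mem ha, hAcard]
        omega
      have himg : (Finset.univ.image f) = NB := by
        apply Finset.eq_of_subset_of_card_le himgsub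
        omega
      have hsurj : ∀ z ∈ NB, ∃ x : {x // x ∈ A.erase a}, f x = z := by
        intro z hz
        rw [← himg] at hz
        obtain ⟨x, _, hfx⟩ := Finset.mem_image.1 hz
        exact ⟨x, hfx⟩
      obtain ⟨T', hT'card, haT', hx0T', hcov⟩ := crit_extract hcrit hax0
      set X : Finset V := A ∪ NA with hXdef
      -- every element of NA is outside N(v) in this case
      have hNAnv : ∀ z ∈ NA, z ∉ G.neighborFinset v := by
        intro z hz hznv
        obtain ⟨x, hx, hzx⟩ := Finset.mem_biUnion.1 hz
        exact absurd ((G.mem_neighborFinset x z).1 hzx)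
          (by
            have := hy z x hx ((G.mem_neighborFinset v z).1 hznv)
            exact this)
      have hclass : ∀ z, z ∉ T' → z ∈ X →
          z ∈ A ∨ (∃ x : {x // x ∈ A.erase a}, f x = z) := by
        intro z hzT hzX
        by_cases hzA : z ∈ A
        · exact Or.inl hzA
        have hzNA : z ∈ NA := by
          rcases Finset.mem_union.1 hzX with h | h
          · exact absurd h hzA
          · exact h
        exact Or.inr (hsurj z (Finset.mem_sdiff.2 ⟨hzNA, hNAnv z hzNA⟩))
      set g : V → V := fun z =>
        if z ∈ A then z
        else if h : ∃ x : {x // x ∈ A.erase a}, f x = z then ((Classical.choose h : {x // x ∈ A.erase a}) : V)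
        else a with hgdef
      have hgA : ∀ z ∈ (Finset.univ \ T') ∩ X, g z ∈ A := by
        intro z hz
        have hzT : z ∉ T' := (Finset.mem_sdiff.1 (Finset.mem_inter.1 hz).1).2
        have hzX : z ∈ X := (Finset.mem_inter.1 hz).2
        rcases hclass z hzT hzX with h | h
        · simp [hgdef, h]
        · have hzA : z ∉ A := by
            intro hzA
            obtain ⟨x, hx⟩ := h
            have := himgsub (Finset.mem_image.2 ⟨x, Finset.mem_univ x, hx⟩)
            exact hNAA z (Finset.mem_sdiff.1 this).1 hzA
          simp only [hgdef, if_neg hzA, dif_pos h]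
          exact Finset.mem_of_mem_erase (Classical.choose h).2
      have hvalB : ∀ z, z ∉ T' → (h : ∃ x : {x // x ∈ A.erase a}, f x = z) → z ∉ A →
          ((Classical.choose h : {x // x ∈ A.erase a}) : V) ∈ T' := by
        intro z hzT h hzA
        set x := Classical.choose h with hxdef
        have hfx : f x = z := Classical.choose_spec h
        have hwA : (x : V) ∈ A.erase a := x.2
        have hwa : (x : V) ≠ a := Finset.ne_of_mem_erase hwA
        have hadj : G.Adj (x : V) z := by
          have := (Finset.mem_sdiff.1 (hfmem x)).1
          rw [hfx] at this
          exact (G.mem_neighborFinset _ _).1 this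
        by_contra hwT
        have hne : s((x : V), z) ≠ s(a, x0) := by
          intro hEq
          rcases Sym2.eq_iff.1 hEq with ⟨h1, _⟩ | ⟨_, h2⟩
          · exact hwa h1
          · exact hzA (by rw [h2]; exact ha)
        rcases hcov hadj hne with hh | hh
        · exact hwT hh
        · exact hzT hh
      have hinj : Set.InjOn g ↑((Finset.univ \ T') ∩ X) := by
        intro z1 hz1 z2 hz2 heq
        simp only [Finset.coe_inter, Set.mem_inter_iff, Finset.mem_coe] at hz1 hz2
        have hz1T : z1 ∉ T' := (Finset.mem_sdiff.1 hz1.1).2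
        have hz2T : z2 ∉ T' := (Finset.mem_sdiff.1 hz2.1).2
        have hz1X : z1 ∈ X := hz1.2
        have hz2X : z2 ∈ X := hz2.2
        rcases hclass z1 hz1T hz1X with h1 | h1 <;>
          rcases hclass z2 hz2T hz2X with h2 | h2
        · simpa [hgdef, h1, h2] using heq
        · exfalso
          have hz2A : z2 ∉ A := fun hc => hNAA z2 (by
            obtain ⟨x, hx⟩ := h2
            exact (Finset.mem_sdiff.1 (himgsub (Finset.mem_image.2 ⟨x, Finset.mem_univ x, hx⟩))).1) hc
          have hb := hvalB z2 hz2T h2 hz2A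
          rw [hgdef] at heq
          simp only [if_pos h1, if_neg hz2A, dif_pos h2] at heq
          rw [heq] at hz1T
          exact hz1T hb
        · exfalso
          have hz1A : z1 ∉ A := fun hc => hNAA z1 (by
            obtain ⟨x, hx⟩ := h1
            exact (Finset.mem_sdiff.1 (himgsub (Finset.mem_image.2 ⟨x, Finset.mem_univ x, hx⟩))).1) hc
          have hb := hvalB z1 hz1T h1 hz1A
          rw [hgdef] at heq
          simp only [if_pos h2, if_neg hz1A, dif_pos h1] at heq
          rw [← heq] at hz2T
          exact hz2T hb
        · have hz1A : z1 ∉ A := fun hc => hNAA z1 (by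
            obtain ⟨x, hx⟩ := h1
            exact (Finset.mem_sdiff.1 (himgsub (Finset.mem_image.2 ⟨x, Finset.mem_univ x, hx⟩))).1) hc
          have hz2A : z2 ∉ A := fun hc => hNAA z2 (by
            obtain ⟨x, hx⟩ := h2
            exact (Finset.mem_sdiff.1 (himgsub (Finset.mem_image.2 ⟨x, Finset.mem_univ x, hx⟩))).1) hc
          rw [hgdef] at heq
          simp only [if_neg hz1A, if_neg hz2A, dif_pos h1, dif_pos h2] at heq
          have : Classical.choose h1 = Classical.choose h2 := Subtype.ext heq
          rw [← Classical.choose_spec h1, ← Classical.choose_spec h2, this]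
      have hcount : ((Finset.univ \ T') ∩ X).card ≤ A.card :=
        Finset.card_le_card_of_injOn g hgA hinj
      refine build_contra hT'card (Finset.subset_union_left) ?_ hAind ?_ hcount
      · intro a' ha' z hadj
        exact Finset.mem_union.2 (Or.inr
          (Finset.mem_biUnion.2 ⟨a', ha', (G.mem_neighborFinset a' z).2 hadj⟩))
      · intro p q hpT hqT hadj
        by_cases hne : s(p, q) = s(a, x0)
        · rcases Sym2.eq_iff.1 hne with ⟨rfl, rfl⟩ | ⟨rfl, rfl⟩
          · exact Or.inl (Finset.mem_union.2 (Or.inl ha))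
          · exact Or.inr (Finset.mem_union.2 (Or.inl ha))
        · rcases hcov hadj hne with h | h
          · exact absurd h hpT
          · exact absurd h hqT

end KeyLemma


/-- Hajnal. For a τ-critical graph `G` with `τ(G) = t` and `|V(G)| = n`,
every vertex has degree at most `2t + 1 − n`. -/
theorem tau_critical_degree_le (G : SimpleGraph V) [Fintype V] [DecidableRel G.Adj]
    (t n : ℕ) (hcrit : IsTauCritical G) (ht : tauNum G = t) (hn : Fintype.card V = n) :
    ∀ v : V, (G.degree v : ℤ) ≤ 2 * t + 1 - n := by
  classical
  intro v
  obtain ⟨u, hvu⟩ := hcrit.1 v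
  obtain ⟨T, hTcard, huT, hvT, hcov⟩ := crit_extract hcrit hvu.symm
  -- here edge is (u, v); T covers all edges except s(u,v); u ∉ T, v ∉ T
  set S : Finset V := ((Finset.univ \ T).erase u).erase v with hSdef
  have hune : u ≠ v := (G.ne_of_adj hvu).symm
  have hSmem : ∀ w ∈ S, w ∉ T ∧ w ≠ u ∧ w ≠ v := by
    intro w hw
    have h1 := Finset.ne_of_mem_erase hw
    have h2 := Finset.mem_of_mem_erase hw
    have h3 := Finset.ne_of_mem_erase h2
    have h4 := Finset.mem_of_mem_erase h2
    exact ⟨(Finset.mem_sdiff.1 h4).2, h3, h1⟩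
  -- covering of edges not equal to uv
  have hcov' : ∀ p q : V, G.Adj p q → ¬(p = u ∧ q = v) → ¬(p = v ∧ q = u) → p ∈ T ∨ q ∈ T := by
    intro p q hpq h1 h2
    apply hcov hpq
    intro hEq
    rcases Sym2.eq_iff.1 hEq with h | h
    · exact h1 h
    · exact h2 h
  -- S is independent
  have hSind : ∀ a ∈ S, ∀ b ∈ S, ¬ G.Adj a b := by
    intro p hp q hq hadj
    obtain ⟨hpT, hpu, hpv⟩ := hSmem p hp
    obtain ⟨hqT, _, hqv⟩ := hSmem q hq
    rcases hcov' p q hadj (fun h => hpu h.1) (fun h => hpv h.1) with h | h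
    · exact hpT h
    · exact hqT h
  -- S avoids N(v)
  have hSv : ∀ a ∈ S, ¬ G.Adj v a := by
    intro p hp hadj
    obtain ⟨hpT, hpu, _⟩ := hSmem p hp
    rcases hcov' v p hadj (fun h => hune h.1.symm) (fun h => hpu h.2) with h | h
    · exact hvT h
    · exact hpT h
  have hvS : v ∉ S := Finset.notMem_erase v _
  -- apply hajnal_lemma
  have hkey := hajnal_lemma hcrit v S.card S le_rfl hSind hSv hvS
  -- N(S) \ N(v) ⊆ T \ N(v)
  have hNS : ((S.biUnion fun x => G.neighborFinset x) \ G.neighborFinset v)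
      ⊆ T \ G.neighborFinset v := by
    intro z hz
    obtain ⟨hzNA, hznv⟩ := Finset.mem_sdiff.1 hz
    obtain ⟨p, hp, hzp⟩ := Finset.mem_biUnion.1 hzNA
    obtain ⟨hpT, hpu, hpv⟩ := hSmem p hp
    have hadj : G.Adj p z := (G.mem_neighborFinset p z).1 hzp
    have hzT : z ∈ T := by
      rcases hcov' p z hadj (fun h => hpu h.1) (fun h => hpv h.1) with h | h
      · exact absurd h hpT
      · exact h
    exact Finset.mem_sdiff.2 ⟨hzT, hznv⟩
  have hkey2 : S.card ≤ (T \ G.neighborFinset v).card :=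
    le_trans hkey (Finset.card_le_card hNS)
  -- cardinalities
  have hucard : u ∈ Finset.univ \ T := Finset.mem_sdiff.2 ⟨Finset.mem_univ u, huT⟩
  have hvcard : v ∈ (Finset.univ \ T).erase u :=
    Finset.mem_erase.2 ⟨hune.symm, Finset.mem_sdiff.2 ⟨Finset.mem_univ v, hvT⟩⟩
  have hScard : S.card + 2 = (Finset.univ \ T).card := by
    rw [hSdef, Finset.card_erase_of_mem hvcard, Finset.card_erase_of_mem hucard]
    have h1 : 1 ≤ ((Finset.univ \ T).erase u).card := Finset.card_pos.2 ⟨v, hvcard⟩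
    have h2 : 1 ≤ (Finset.univ \ T).card := Finset.card_pos.2 ⟨u, hucard⟩
    have h3 := Finset.card_erase_of_mem hucard
    omega
  have hunivT : (Finset.univ \ T).card + T.card = Fintype.card V := by
    rw [Finset.card_sdiff_add_card_eq_card (Finset.subset_univ T), Finset.card_univ]
  -- T ∩ N(v) = N(v).erase u
  have hTN : T ∩ G.neighborFinset v = (G.neighborFinset v).erase u := by
    ext w
    constructor
    · intro hw
      obtain ⟨hwT, hwnv⟩ := Finset.mem_inter.1 hw
      exact Finset.mem_erase.2 ⟨fun h => huT (h ▸ hwT), hwnv⟩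
    · intro hw
      have hwu := Finset.ne_of_mem_erase hw
      have hwnv := Finset.mem_of_mem_erase hw
      have hadj : G.Adj v w := (G.mem_neighborFinset v w).1 hwnv
      refine Finset.mem_inter.2 ⟨?_, hwnv⟩
      rcases hcov' v w hadj (fun h => hune h.1.symm) (fun h => hwu h.2) with h | h
      · exact absurd h hvT
      · exact h
  have hTNcard : (T ∩ G.neighborFinset v).card + 1 = G.degree v := by
    rw [hTN, Finset.card_erase_of_mem ((G.mem_neighborFinset v u).2 hvu)]
    have : 1 ≤ (G.neighborFinset v).card := Finset.card_pos.2 ⟨u, (G.mem_neighborFinset v u).2 hvu⟩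
    rw [← SimpleGraph.card_neighborFinset_eq_degree]
    omega
  have hTsplit : (T ∩ G.neighborFinset v).card + (T \ G.neighborFinset v).card = T.card :=
    Finset.card_inter_add_card_sdiff T (G.neighborFinset v)
  -- final arithmetic
  have h1 : T.card + 1 = t := by rw [← ht]; exact hTcard
  have h2 : Fintype.card V = n := hn
  omega
end
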